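/- Let P be a Borel probability measure on ℝ^d, P_n the empirical measure of an i.i.d. sample from P, x ∈ ℝ^d, t_n > 0, and γ_n > 0 such that HD(t_n x, P) > γ_n and the infima defining HD(t_n x,P) and HD(t_n x,P_n) over closed halfspaces containing t_n x are attained. Then |HD(t_n x,P_n)/HD(t_n x,P) − 1| ≤ sup{ |P_n(H)/P(H) − 1| : H ∈ 𝓗_{t_n x}, P(H) ≥ γ_n }. -/

import Mathlib

open MeasureTheory Filter Topology
open scoped RealInnerProductSpace ENNReal Pointwise

noncomputable section

/-- The collection of closed halfspaces of `ℝ^d`. -/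
def halfspaces (d : ℕ) : Set (Set (EuclideanSpace ℝ (Fin d))) :=
  {H | ∃ (h : EuclideanSpace ℝ (Fin d)) (c : ℝ), h ≠ 0 ∧ H = {y | c ≤ ⟪h, y⟫}}

/-- The collection `𝓗_z` of closed halfspaces of `ℝ^d` containing the point `z`. -/
def halfspacesAt {d : ℕ} (z : EuclideanSpace ℝ (Fin d)) : Set (Set (EuclideanSpace ℝ (Fin d))) :=
  {H | H ∈ halfspaces d ∧ z ∈ H}

/-- The halfspace (Tukey) depth of `x` with respect to the measure `P`:
`HD(x,P) = inf { P(H) : H a closed halfspace containing x }`. -/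
def HD {d : ℕ} (P : Measure (EuclideanSpace ℝ (Fin d))) (x : EuclideanSpace ℝ (Fin d)) : ℝ :=
  sInf ((fun H => (P H).toReal) '' halfspacesAt x)

/-- Empirical measure `P_n = (1/n) ∑_{i<n} δ_{X i}`. -/
def empMeasure {d : ℕ} (n : ℕ) (X : ℕ → EuclideanSpace ℝ (Fin d)) :
    Measure (EuclideanSpace ℝ (Fin d)) :=
  (n : ℝ≥0∞)⁻¹ • ∑ i ∈ Finset.range n, Measure.dirac (X i)

/-- The class `𝓒_t` in the definition of Alexander's capacity function. -/
def capacityClass {d : ℕ} (P : Measure (EuclideanSpace ℝ (Fin d))) (t : ℝ) :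
    Set (Set (EuclideanSpace ℝ (Fin d))) :=
  {C | C ∈ halfspaces d ∧ (P C).toReal * (1 - (P C).toReal) ≤ t ∧ (P C).toReal ≤ 1/2} ∪
  {C | ∃ H ∈ halfspaces d, C = Hᶜ ∧ (P H).toReal * (1 - (P H).toReal) ≤ t ∧ 1/2 < (P H).toReal}

/-- The capacity function `g_c(t) = max(P(E_t), t)/t` of `P` for the class of all
closed halfspaces. -/
def gcap {d : ℕ} (P : Measure (EuclideanSpace ℝ (Fin d))) (t : ℝ) : ℝ :=
  max (P (⋃₀ capacityClass P t)).toReal t / t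

/-- If `HD(t_n x, P) > γ_n > 0` and the infima defining `HD(t_n x,P)` and
`HD(t_n x,P_n)` over closed halfspaces containing `t_n x` are attained, then
`|HD(t_n x,P_n)/HD(t_n x,P) − 1| ≤ sup{ |P_n(H)/P(H) − 1| : H ∈ 𝓗_{t_n x}, P(H) ≥ γ_n }`. -/
theorem halfspace_depth_ratio_bound_restricted
    {d : ℕ} (P : Measure (EuclideanSpace ℝ (Fin d))) [IsProbabilityMeasure P]
    {Ω : Type} [MeasurableSpace Ω] (μ : Measure Ω) [IsProbabilityMeasure μ]
    (X : ℕ → Ω → EuclideanSpace ℝ (Fin d))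
    (hmeas : ∀ i, Measurable (X i))
    (hindep : ProbabilityTheory.iIndepFun X μ)
    (hdist : ∀ i, Measure.map (X i) μ = P)
    (n : ℕ) (ω : Ω) (tn γn : ℝ) (x : EuclideanSpace ℝ (Fin d))
    (htn : 0 < tn) (hγn : 0 < γn)
    (hdepth : γn < HD P (tn • x))
    (hattP : ∃ H ∈ halfspacesAt (tn • x), (P H).toReal = HD P (tn • x))
    (hattPn : ∃ H ∈ halfspacesAt (tn • x),
      (empMeasure n (fun i => X i ω) H).toReal = HD (empMeasure n (fun i => X i ω)) (tn • x)) :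
    |HD (empMeasure n (fun i => X i ω)) (tn • x) / HD P (tn • x) - 1| ≤
      sSup {r : ℝ | ∃ H ∈ halfspacesAt (tn • x), γn ≤ (P H).toReal ∧
        r = |(empMeasure n (fun i => X i ω) H).toReal / (P H).toReal - 1|} := by
  classical
  obtain ⟨Hs, hHs, hPHs⟩ := hattP
  obtain ⟨Gs, hGs, hQGs⟩ := hattPn
  set Q := empMeasure n (fun i => X i ω) with hQdef
  set z := tn • x with hz
  set p := HD P z with hpdef
  set q := HD Q z with hqdef
  have hp0 : 0 < p := lt_trans hγn hdepth
  -- Q of any set is at most 1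
  have hQuniv : Q Set.univ ≤ 1 := by
    rcases Nat.eq_zero_or_pos n with h | h
    · simp [hQdef, empMeasure, h]
    · have : Q Set.univ = (n : ℝ≥0∞)⁻¹ * n := by
        simp [hQdef, empMeasure, Measure.smul_apply, Measure.finset_sum_apply]
      rw [this, ENNReal.inv_mul_cancel (by exact_mod_cast h.ne') (by simp)]
  have hQle : ∀ H : Set (EuclideanSpace ℝ (Fin d)), (Q H).toReal ≤ 1 := by
    intro H
    have h1 : Q H ≤ 1 := le_trans (measure_mono (Set.subset_univ _)) hQuniv
    exact ENNReal.toReal_le_of_le_ofReal zero_le_one (by simpa using h1)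
  -- lower boundedness of the HD defining sets
  have hbb : ∀ (ν : Measure (EuclideanSpace ℝ (Fin d))),
      BddBelow ((fun H => (ν H).toReal) '' halfspacesAt z) := by
    intro ν
    exact ⟨0, by rintro r ⟨H, -, rfl⟩; exact ENNReal.toReal_nonneg⟩
  have hq_le : q ≤ (Q Hs).toReal := csInf_le (hbb Q) ⟨Hs, hHs, rfl⟩
  have hp_le : p ≤ (P Gs).toReal := csInf_le (hbb P) ⟨Gs, hGs, rfl⟩
  have hq0 : 0 ≤ q := hQGs ▸ ENNReal.toReal_nonneg
  -- The sup set is bounded above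
  set S := {r : ℝ | ∃ H ∈ halfspacesAt z, γn ≤ (P H).toReal ∧
      r = |(Q H).toReal / (P H).toReal - 1|} with hSdef
  have hbdd : BddAbove S := by
    refine ⟨1 / γn + 1, ?_⟩
    rintro r ⟨H, hH, hγH, rfl⟩
    have h1 : (Q H).toReal / (P H).toReal ≤ 1 / γn :=
      div_le_div₀ zero_le_one (hQle H) hγn hγH
    have h2 : 0 ≤ (Q H).toReal / (P H).toReal :=
      div_nonneg ENNReal.toReal_nonneg ENNReal.toReal_nonneg
    rw [abs_sub_le_iff]
    constructor <;> [skip; skip] <;> nlinarith [div_nonneg (le_of_lt hγn) (le_of_lt hγn)]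
  -- first element of S
  have hmem1 : |(Q Hs).toReal / p - 1| ∈ S := by
    refine ⟨Hs, hHs, ?_, ?_⟩
    · rw [hPHs]; exact le_of_lt hdepth
    · rw [hPHs]
  have hle1 : |(Q Hs).toReal / p - 1| ≤ sSup S := le_csSup hbdd hmem1
  -- second element of S
  have hγG : γn ≤ (P Gs).toReal := le_trans (le_of_lt hdepth) hp_le
  have hmem2 : |q / (P Gs).toReal - 1| ∈ S := ⟨Gs, hGs, hγG, by rw [hQGs]⟩
  have hle2 : |q / (P Gs).toReal - 1| ≤ sSup S := le_csSup hbdd hmem2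
  -- combine
  have h3 : q / p ≤ (Q Hs).toReal / p := by gcongr
  have h4 : q / (P Gs).toReal ≤ q / p := by gcongr
  have h5 := le_abs_self ((Q Hs).toReal / p - 1)
  have h6 := neg_le_abs (q / (P Gs).toReal - 1)
  rw [abs_le]
  constructor <;> linarith
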